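/- The total optimal earnings of the LP, r_s*w_0 + sum_{i=1}^n f*Vol_i*w_i/(TVL_i + w_i) with w_i = TVL_i*(sqrt(r_i(0)/r_s) - 1) and w_0 = W - sum w_i, equals r_s*W + sum_{i=1}^n TVL_i*(sqrt(r_i(0)) - sqrt(r_s))^2. -/

import Mathlib

lemma stmt_11_aux (T r rs : ℝ) (hT : 0 < T) (hrs : 0 < rs) (hle : rs ≤ r) :
    r * T * (T * (Real.sqrt (r / rs) - 1)) / (T + T * (Real.sqrt (r / rs) - 1))
      - rs * (T * (Real.sqrt (r / rs) - 1))
      = T * (Real.sqrt r - Real.sqrt rs) ^ 2 := by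
  have hrpos : 0 < r := lt_of_lt_of_le hrs hle
  have hsr : 0 < Real.sqrt r := Real.sqrt_pos.2 hrpos
  have hsrs : 0 < Real.sqrt rs := Real.sqrt_pos.2 hrs
  have hsq : Real.sqrt (r / rs) = Real.sqrt r / Real.sqrt rs := Real.sqrt_div hrpos.le rs
  have hr2 : Real.sqrt r ^ 2 = r := Real.sq_sqrt hrpos.le
  have hrs2 : Real.sqrt rs ^ 2 = rs := Real.sq_sqrt hrs.le
  have hden : T + T * (Real.sqrt (r / rs) - 1) = T * (Real.sqrt r / Real.sqrt rs) := by
    rw [hsq]; ring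
  rw [hden, hsq]
  field_simp
  linear_combination (-(Real.sqrt r - Real.sqrt rs) * Real.sqrt rs) * hr2
    + ((Real.sqrt r - Real.sqrt rs) * Real.sqrt r) * hrs2

/-- The optimal total earnings equal the staking return on all wealth plus a
premium `TVLᵢ*(√(rᵢ(0)) - √rs)²` from each pool. -/
theorem stmt_11 (n : ℕ) (f rs W : ℝ) (Vol TVL : Fin n → ℝ)
    (hf : 0 < f) (hrs : 0 < rs) (hW : 0 < W)
    (hVol : ∀ i, 0 < Vol i) (hTVL : ∀ i, 0 < TVL i)
    (hge : ∀ i, rs ≤ f * Vol i / TVL i)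
    (w : Fin n → ℝ)
    (hw : ∀ i, w i = TVL i * (Real.sqrt ((f * Vol i / TVL i) / rs) - 1))
    (w0 : ℝ) (hw0 : w0 = W - ∑ i, w i) (hw0pos : 0 ≤ w0) :
    rs * w0 + ∑ i, f * Vol i * w i / (TVL i + w i)
      = rs * W + ∑ i, TVL i * (Real.sqrt (f * Vol i / TVL i) - Real.sqrt rs) ^ 2 := by
  have key : ∀ i, f * Vol i * w i / (TVL i + w i) - rs * w i
      = TVL i * (Real.sqrt (f * Vol i / TVL i) - Real.sqrt rs) ^ 2 := by
    intro i
    have h := stmt_11_aux (TVL i) (f * Vol i / TVL i) rs (hTVL i) hrs (hge i)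
    rw [div_mul_cancel₀ _ (hTVL i).ne'] at h
    rw [hw i]; exact h
  rw [hw0]
  have : ∑ i, f * Vol i * w i / (TVL i + w i)
      = ∑ i, (TVL i * (Real.sqrt (f * Vol i / TVL i) - Real.sqrt rs) ^ 2 + rs * w i) := by
    refine Finset.sum_congr rfl fun i _ => ?_
    have := key i; linarith
  rw [this, Finset.sum_add_distrib, ← Finset.mul_sum]
  ring
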